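/- Let G be a finite graph in which every ball of radius n contains at most one cycle (n ≤ ℓ_G). Then for any two vertices x, y with d_G(x,y) = k ≤ n, there are at most two non-backtracking paths of length k from x to y. -/

import Mathlib

open SimpleGraph Walk

section Aux

variable {V : Type*} [DecidableEq V] {G : SimpleGraph V}

private lemma exists_prefix_until {a y : V} (r : G.Walk a y) (L : List V) (hy : y ∈ L) :
    r.IsPath →
    ∃ (z : V) (r₁ : G.Walk a z), r₁.IsPath ∧ z ∈ L ∧
      (∀ v ∈ r₁.support, v ≠ z → v ∉ L) ∧
      (∀ v ∈ r₁.support, v ∈ r.support) ∧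
      (∀ e ∈ r₁.edges, e ∈ r.edges) := by
  induction r with
  | nil =>
    intro _
    exact ⟨_, Walk.nil, Walk.IsPath.nil, hy, by simp, by simp, by simp⟩
  | @cons a c y h r' ih =>
    intro hr
    by_cases ha : a ∈ L
    · exact ⟨a, Walk.nil, Walk.IsPath.nil, ha, by simp, by simp, by simp⟩
    · obtain ⟨z, r₁, hpath, hzL, hnot, hsup, hedg⟩ := ih hy hr.of_cons
      have haR : a ∉ r'.support := ((Walk.cons_isPath_iff h r').1 hr).2
      refine ⟨z, Walk.cons h r₁, ?_, hzL, ?_, ?_, ?_⟩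
      · exact Walk.IsPath.cons hpath (fun hc => haR (hsup a hc))
      · intro v hv hvz
        rw [Walk.support_cons, List.mem_cons] at hv
        rcases hv with rfl | hv
        · exact ha
        · exact hnot v hv hvz
      · intro v hv
        rw [Walk.support_cons, List.mem_cons] at hv
        rw [Walk.support_cons, List.mem_cons]
        rcases hv with rfl | hv
        · exact Or.inl rfl
        · exact Or.inr (hsup v hv)
      · intro e he
        rw [Walk.edges_cons, List.mem_cons] at he
        rw [Walk.edges_cons, List.mem_cons]
        rcases he with rfl | he
        · exact Or.inl rfl
        · exact Or.inr (hedg e he)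

private lemma isPath_append' {a b c : V} {p : G.Walk a b} {q : G.Walk b c}
    (hp : p.IsPath) (hq : q.IsPath)
    (h : ∀ v ∈ p.support, v ∈ q.support → v = b) : (p.append q).IsPath := by
  rw [Walk.isPath_def, Walk.support_append]
  have htail : q.support.tail.Nodup := (List.tail_sublist _).nodup hq.support_nodup
  have hbnot : b ∉ q.support.tail := by
    have := hq.support_nodup
    rw [q.support_eq_cons] at this
    exact (List.nodup_cons.1 this).1
  refine hp.support_nodup.append htail ?_
  intro v hv hv'
  have hvq : v ∈ q.support := List.mem_of_mem_tail hv'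
  have := h v hv hvq
  subst this
  exact hbnot hv'

private lemma cycle_of_two_paths {a b : V} (p : G.Walk a b) :
    ∀ q : G.Walk a b, p.IsPath → q.IsPath → p ≠ q →
    ∃ (w : V) (c : G.Walk w w), c.IsCycle ∧
      (∀ v ∈ c.support, v ∈ p.support ∨ v ∈ q.support) ∧
      (∀ e ∈ c.edges, e ∈ p.edges ∨ e ∈ q.edges) := by
  induction p with
  | nil =>
    intro q _ hq hne
    rw [Walk.isPath_iff_eq_nil] at hq
    exact absurd hq.symm hne
  | @cons a c b h p' ih =>
    intro q hp hq hne
    cases q with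
    | nil =>
      rw [Walk.isPath_iff_eq_nil] at hp
      simp at hp
    | @cons _ d _ h' q' =>
      by_cases hcd : c = d
      · subst hcd
        have hne' : p' ≠ q' := by rintro rfl; exact hne rfl
        obtain ⟨w, cyc, hc, hsup, hedg⟩ := ih q' hp.of_cons hq.of_cons hne'
        refine ⟨w, cyc, hc, ?_, ?_⟩
        · intro v hv
          rcases hsup v hv with hv' | hv'
          · exact Or.inl (by rw [Walk.support_cons]; exact List.mem_cons_of_mem _ hv')
          · exact Or.inr (by rw [Walk.support_cons]; exact List.mem_cons_of_mem _ hv')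
        · intro e he
          rcases hedg e he with he' | he'
          · exact Or.inl (by rw [Walk.edges_cons]; exact List.mem_cons_of_mem _ he')
          · exact Or.inr (by rw [Walk.edges_cons]; exact List.mem_cons_of_mem _ he')
      · -- divergence at a
        have hxp' : a ∉ p'.support := ((Walk.cons_isPath_iff h p').1 hp).2
        have hxq' : a ∉ q'.support := ((Walk.cons_isPath_iff h' q').1 hq).2
        have hy : b ∈ (Walk.cons h' q').support := Walk.end_mem_support _
        obtain ⟨z, p₁, hp₁path, hzq, hnot, hsub, hedgesub⟩ :=
          exists_prefix_until p' (Walk.cons h' q').support hy hp.of_cons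
        set q₁ := (Walk.cons h' q').takeUntil z hzq with hq₁def
        have hq₁path : q₁.IsPath := hq.takeUntil hzq
        have hq₁sup : ∀ v ∈ q₁.support, v ∈ (Walk.cons h' q').support :=
          fun v hv => Walk.support_takeUntil_subset _ hzq hv
        have hq₁edg : ∀ e ∈ q₁.edges, e ∈ (Walk.cons h' q').edges :=
          fun e he => Walk.edges_takeUntil_subset _ hzq he
        -- disjointness
        have D : ∀ v ∈ p₁.support, v ∈ q₁.reverse.support → v = z := by
          intro v hv hv'
          by_contra hvz
          rw [Walk.support_reverse, List.mem_reverse] at hv'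
          exact hnot v hv hvz (hq₁sup v hv')
        set W : G.Walk c a := p₁.append q₁.reverse with hWdef
        have hWpath : W.IsPath := isPath_append' hp₁path hq₁path.reverse D
        have hedge : s(a, c) ∉ W.edges := by
          intro hmem
          rw [hWdef, Walk.edges_append, List.mem_append] at hmem
          rcases hmem with hmem | hmem
          · exact hxp' (p'.fst_mem_support_of_mem_edges (hedgesub _ hmem))
          · rw [Walk.edges_reverse, List.mem_reverse] at hmem
            have := hq₁edg _ hmem
            rw [Walk.edges_cons, List.mem_cons] at this
            rcases this with heq | hmem'
            · exact hcd (Sym2.congr_right.1 heq)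
            · exact hxq' (q'.fst_mem_support_of_mem_edges hmem')
        have hcyc : (Walk.cons h W).IsCycle := (Walk.cons_isCycle_iff W h).2 ⟨hWpath, hedge⟩
        refine ⟨a, Walk.cons h W, hcyc, ?_, ?_⟩
        · intro v hv
          rw [Walk.support_cons, List.mem_cons] at hv
          rcases hv with rfl | hv
          · exact Or.inl (Walk.start_mem_support _)
          · rw [hWdef, Walk.mem_support_append_iff] at hv
            rcases hv with hv | hv
            · exact Or.inl (by rw [Walk.support_cons]; exact List.mem_cons_of_mem _ (hsub v hv))
            · rw [Walk.support_reverse, List.mem_reverse] at hv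
              exact Or.inr (hq₁sup v hv)
        · intro e he
          rw [Walk.edges_cons, List.mem_cons] at he
          rcases he with rfl | he
          · exact Or.inl (by rw [Walk.edges_cons]; exact List.mem_cons_self)
          · rw [hWdef, Walk.edges_append, List.mem_append] at he
            rcases he with he | he
            · exact Or.inl (by rw [Walk.edges_cons]; exact List.mem_cons_of_mem _ (hedgesub e he))
            · rw [Walk.edges_reverse, List.mem_reverse] at he
              exact Or.inr (hq₁edg e he)

private lemma exists_decomp_of_mem_darts {a b : V} (p : G.Walk a b) :
    ∀ d : G.Dart, d ∈ p.darts →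
    ∃ (p₁ : G.Walk a d.toProd.1) (p₂ : G.Walk d.toProd.2 b),
      p = p₁.append (Walk.cons d.adj p₂) := by
  induction p with
  | nil => intro d hd; simp [Walk.darts_nil] at hd
  | @cons a c b h p' ih =>
    intro d hd
    rw [Walk.darts_cons, List.mem_cons] at hd
    rcases hd with rfl | hd
    · exact ⟨Walk.nil, p', rfl⟩
    · obtain ⟨p₁, p₂, hsplit⟩ := ih d hd
      exact ⟨Walk.cons h p₁, p₂, by rw [Walk.cons_append, ← hsplit]⟩

private lemma dist_decomp {x b u v : V} {p : G.Walk x b} (hlen : p.length = G.dist x b)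
    {p₁ : G.Walk x u} {h : G.Adj u v} {p₂ : G.Walk v b}
    (hsplit : p = p₁.append (Walk.cons h p₂)) :
    G.dist x u = p₁.length ∧ G.dist x v = p₁.length + 1 := by
  have hL : p₁.length + (p₂.length + 1) = G.dist x b := by
    rw [← hlen, hsplit, Walk.length_append, Walk.length_cons]
  have h1 : G.dist x u ≤ p₁.length := dist_le p₁
  have h2 : G.dist x v ≤ p₁.length + 1 := by
    have := dist_le (p₁.append (Walk.cons h Walk.nil))
    simpa [Walk.length_append] using this
  have hru : G.Reachable x u := ⟨p₁⟩
  obtain ⟨r, hr⟩ := hru.exists_walk_length_eq_dist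
  have h3 : G.dist x b ≤ G.dist x u + (p₂.length + 1) := by
    have := dist_le (r.append (Walk.cons h p₂))
    rw [Walk.length_append, Walk.length_cons, hr] at this
    omega
  have hrv : G.Reachable x v := ⟨p₁.append (Walk.cons h Walk.nil)⟩
  obtain ⟨r', hr'⟩ := hrv.exists_walk_length_eq_dist
  have h4 : G.dist x b ≤ G.dist x v + p₂.length := by
    have := dist_le (r'.append p₂)
    rw [Walk.length_append, hr'] at this
    omega
  omega

end Aux

/-- If every ball of radius `n` in `G` contains at most one cycle, then between
any two vertices at distance `k ≤ n` there are at most two non-backtracking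
walks of length `k`. -/
theorem nonbacktracking_paths_le_two {V : Type*} [DecidableEq V]
    (G : SimpleGraph V) (n k : ℕ) (hkn : k ≤ n)
    (honecycle : ∀ (u a b : V) (c : G.Walk a a) (c' : G.Walk b b),
      c.IsCycle → c'.IsCycle →
      (∀ v ∈ c.support, G.Reachable u v ∧ G.dist u v ≤ n) →
      (∀ v ∈ c'.support, G.Reachable u v ∧ G.dist u v ≤ n) →
      c.edges.toFinset = c'.edges.toFinset)
    (x y : V) (hreach : G.Reachable x y) (hdist : G.dist x y = k)
    (p₁ p₂ p₃ : G.Walk x y)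
    (h₁ : p₁.length = k) (h₂ : p₂.length = k) (h₃ : p₃.length = k)
    (nb₁ : p₁.darts.Chain' fun d d' => d' ≠ d.symm)
    (nb₂ : p₂.darts.Chain' fun d d' => d' ≠ d.symm)
    (nb₃ : p₃.darts.Chain' fun d d' => d' ≠ d.symm) :
    p₁ = p₂ ∨ p₁ = p₃ ∨ p₂ = p₃ := by
  by_contra hcon
  push_neg at hcon
  obtain ⟨h12, h13, h23⟩ := hcon
  have hP₁ : p₁.IsPath := p₁.isPath_of_length_eq_dist (h₁.trans hdist.symm)
  have hP₂ : p₂.IsPath := p₂.isPath_of_length_eq_dist (h₂.trans hdist.symm)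
  have hP₃ : p₃.IsPath := p₃.isPath_of_length_eq_dist (h₃.trans hdist.symm)
  have ball : ∀ (p : G.Walk x y), p.length = k →
      ∀ v ∈ p.support, G.Reachable x v ∧ G.dist x v ≤ n := by
    intro p hp v hv
    refine ⟨⟨p.takeUntil v hv⟩, ?_⟩
    calc G.dist x v ≤ (p.takeUntil v hv).length := dist_le _
      _ ≤ p.length := Walk.length_takeUntil_le p hv
      _ = k := hp
      _ ≤ n := hkn
  obtain ⟨w₀, C, hC, hCsup, hCedg⟩ := cycle_of_two_paths p₁ p₂ hP₁ hP₂ h12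
  have hCball : ∀ v ∈ C.support, G.Reachable x v ∧ G.dist x v ≤ n := by
    intro v hv
    rcases hCsup v hv with h | h
    · exact ball p₁ h₁ v h
    · exact ball p₂ h₂ v h
  have hCne : C.edges ≠ [] := by
    have h3 := hC.three_le_length
    intro hnil
    rw [← Walk.length_edges, hnil] at h3
    simp at h3
  obtain ⟨e₀, he₀⟩ := List.exists_mem_of_ne_nil _ hCne
  -- every cycle in the ball contains e₀
  have K : ∀ (w : V) (c : G.Walk w w), c.IsCycle →
      (∀ v ∈ c.support, G.Reachable x v ∧ G.dist x v ≤ n) → e₀ ∈ c.edges := by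
    intro w c hc hb
    have heq := honecycle x w w₀ c C hc hC hb hCball
    have : e₀ ∈ c.edges.toFinset := heq ▸ List.mem_toFinset.2 he₀
    exact List.mem_toFinset.1 this
  -- two paths avoiding e₀ with support in the ball are equal
  have K2 : ∀ (s t : V) (pa pb : G.Walk s t), pa.IsPath → pb.IsPath →
      (∀ v ∈ pa.support, G.Reachable x v ∧ G.dist x v ≤ n) →
      (∀ v ∈ pb.support, G.Reachable x v ∧ G.dist x v ≤ n) →
      e₀ ∉ pa.edges → e₀ ∉ pb.edges → pa = pb := by
    intro s t pa pb hpa hpb hba hbb hea heb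
    by_contra hne
    obtain ⟨w, c, hc, hsup, hedg⟩ := cycle_of_two_paths pa pb hpa hpb hne
    have hmem : e₀ ∈ c.edges := by
      refine K w c hc ?_
      intro v hv
      rcases hsup v hv with h | h
      · exact hba v h
      · exact hbb v h
    rcases hedg e₀ hmem with h | h
    · exact hea h
    · exact heb h
  -- two geodesics both containing e₀ are equal
  have K3 : ∀ (pa pb : G.Walk x y), pa.length = k → pb.length = k →
      e₀ ∈ pa.edges → e₀ ∈ pb.edges → pa = pb := by
    intro pa pb hla hlb hea heb
    have hPa : pa.IsPath := pa.isPath_of_length_eq_dist (hla.trans hdist.symm)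
    have hPb : pb.IsPath := pb.isPath_of_length_eq_dist (hlb.trans hdist.symm)
    obtain ⟨da, hda, hdae⟩ : ∃ d ∈ pa.darts, d.edge = e₀ := by
      rw [Walk.edges, List.mem_map] at hea
      obtain ⟨d, hd, hde⟩ := hea
      exact ⟨d, hd, hde⟩
    obtain ⟨db, hdb, hdbe⟩ : ∃ d ∈ pb.darts, d.edge = e₀ := by
      rw [Walk.edges, List.mem_map] at heb
      obtain ⟨d, hd, hde⟩ := heb
      exact ⟨d, hd, hde⟩
    obtain ⟨a₁, a₂, hsa⟩ := exists_decomp_of_mem_darts pa da hda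
    obtain ⟨b₁, b₂, hsb⟩ := exists_decomp_of_mem_darts pb db hdb
    have hda2 := dist_decomp (hla.trans hdist.symm) hsa
    have hdb2 := dist_decomp (hlb.trans hdist.symm) hsb
    have hori : db = da ∨ db = da.symm :=
      (dart_edge_eq_iff db da).1 (hdbe.trans hdae.symm)
    rcases hori with rfl | hsym
    · -- same orientation
      have hPa' : (a₁.append (Walk.cons db.adj a₂)).IsPath := hsa ▸ hPa
      have hPb' : (b₁.append (Walk.cons db.adj b₂)).IsPath := hsb ▸ hPb
      have he₀a : db.edge = e₀ := hdae
      have hedgesa : pa.edges = a₁.edges ++ (s(db.toProd.1, db.toProd.2) :: a₂.edges) := by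
        rw [hsa, Walk.edges_append, Walk.edges_cons]
      have hedgesb : pb.edges = b₁.edges ++ (s(db.toProd.1, db.toProd.2) :: b₂.edges) := by
        rw [hsb, Walk.edges_append, Walk.edges_cons]
      have hee : s(db.toProd.1, db.toProd.2) = e₀ := hdae
      have hnda : pa.edges.Nodup := hPa.edges_nodup
      have hndb : pb.edges.Nodup := hPb.edges_nodup
      rw [hedgesa, hee, List.nodup_append] at hnda
      rw [hedgesb, hee, List.nodup_append] at hndb
      have hea1 : e₀ ∉ a₁.edges := fun hmem => hnda.2.2 _ hmem _ List.mem_cons_self rfl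
      have hea2 : e₀ ∉ a₂.edges := (List.nodup_cons.1 hnda.2.1).1
      have heb1 : e₀ ∉ b₁.edges := fun hmem => hndb.2.2 _ hmem _ List.mem_cons_self rfl
      have heb2 : e₀ ∉ b₂.edges := (List.nodup_cons.1 hndb.2.1).1
      have hma : ∀ v ∈ a₁.support, v ∈ pa.support := by
        intro v hv; rw [hsa]; exact Walk.subset_support_append_left _ _ hv
      have hma2 : ∀ v ∈ a₂.support, v ∈ pa.support := by
        intro v hv; rw [hsa]
        exact Walk.subset_support_append_right _ _
          (by rw [Walk.support_cons]; exact List.mem_cons_of_mem _ hv)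
      have hmb : ∀ v ∈ b₁.support, v ∈ pb.support := by
        intro v hv; rw [hsb]; exact Walk.subset_support_append_left _ _ hv
      have hmb2 : ∀ v ∈ b₂.support, v ∈ pb.support := by
        intro v hv; rw [hsb]
        exact Walk.subset_support_append_right _ _
          (by rw [Walk.support_cons]; exact List.mem_cons_of_mem _ hv)
      have h1 : a₁ = b₁ := by
        refine K2 _ _ a₁ b₁ hPa'.of_append_left hPb'.of_append_left ?_ ?_ hea1 heb1
        · exact fun v hv => ball pa hla v (hma v hv)
        · exact fun v hv => ball pb hlb v (hmb v hv)
      have h2 : a₂ = b₂ := by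
        refine K2 _ _ a₂ b₂ hPa'.of_append_right.of_cons hPb'.of_append_right.of_cons
          ?_ ?_ hea2 heb2
        · exact fun v hv => ball pa hla v (hma2 v hv)
        · exact fun v hv => ball pb hlb v (hmb2 v hv)
      rw [hsa, hsb, h1, h2]
    · -- opposite orientation: distance contradiction
      exfalso
      subst hsym
      simp only [Dart.symm_toProd, Prod.fst_swap, Prod.snd_swap] at hdb2
      omega
  by_cases a1 : e₀ ∈ p₁.edges <;> by_cases a2 : e₀ ∈ p₂.edges <;>
    by_cases a3 : e₀ ∈ p₃.edges
  · exact h12 (K3 p₁ p₂ h₁ h₂ a1 a2)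
  · exact h12 (K3 p₁ p₂ h₁ h₂ a1 a2)
  · exact h13 (K3 p₁ p₃ h₁ h₃ a1 a3)
  · exact h23 (K2 x y p₂ p₃ hP₂ hP₃ (ball p₂ h₂) (ball p₃ h₃) a2 a3)
  · exact h23 (K3 p₂ p₃ h₂ h₃ a2 a3)
  · exact h13 (K2 x y p₁ p₃ hP₁ hP₃ (ball p₁ h₁) (ball p₃ h₃) a1 a3)
  · exact h12 (K2 x y p₁ p₂ hP₁ hP₂ (ball p₁ h₁) (ball p₂ h₂) a1 a2)
  · exact h12 (K2 x y p₁ p₂ hP₁ hP₂ (ball p₁ h₁) (ball p₂ h₂) a1 a2)
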